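/- For dim V = 3, there exist a self-adjoint operator B and a skew-adjoint operator C with {I, B, C} linearly independent such that {R^S_I, R^S_B, R^Λ_C} is linearly dependent: take B with eigenvalues 2, 2, 1/2 in an orthonormal basis and C with C e_1 = −e_2, C e_2 = e_1, C e_3 = 0; then R^S_I + R^S_B − R^Λ_C = 0. -/

import Mathlib

open RealInnerProductSpace

noncomputable def RS3 (A : EuclideanSpace ℝ (Fin 3) →ₗ[ℝ] EuclideanSpace ℝ (Fin 3))
    (x y z w : EuclideanSpace ℝ (Fin 3)) : ℝ :=
  ⟪A x, w⟫ * ⟪A y, z⟫ - ⟪A x, z⟫ * ⟪A y, w⟫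

noncomputable def RL3 (A : EuclideanSpace ℝ (Fin 3) →ₗ[ℝ] EuclideanSpace ℝ (Fin 3))
    (x y z w : EuclideanSpace ℝ (Fin 3)) : ℝ :=
  RS3 A x y z w - 2 * ⟪A x, y⟫ * ⟪A z, w⟫

noncomputable def Bmap : EuclideanSpace ℝ (Fin 3) →ₗ[ℝ] EuclideanSpace ℝ (Fin 3) where
  toFun x := WithLp.toLp 2 ![Real.sqrt 2 * x 0, Real.sqrt 2 * x 1, -(Real.sqrt 2 / 2) * x 2]
  map_add' x y := by
    ext i
    fin_cases i <;> simp [PiLp.add_apply] <;> ring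
  map_smul' r x := by
    ext i
    fin_cases i <;> simp [PiLp.smul_apply, smul_eq_mul] <;> ring

noncomputable def Cmap : EuclideanSpace ℝ (Fin 3) →ₗ[ℝ] EuclideanSpace ℝ (Fin 3) where
  toFun x := WithLp.toLp 2 ![x 1, -x 0, 0]
  map_add' x y := by
    ext i
    fin_cases i <;> simp [PiLp.add_apply] <;> ring
  map_smul' r x := by
    ext i
    fin_cases i <;> simp [PiLp.smul_apply, smul_eq_mul] <;> ring

theorem stmt_19 :
    ∃ B C : EuclideanSpace ℝ (Fin 3) →ₗ[ℝ] EuclideanSpace ℝ (Fin 3),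
      LinearMap.adjoint B = B ∧ LinearMap.adjoint C = -C ∧
      (∀ a b c : ℝ,
        a • (LinearMap.id : EuclideanSpace ℝ (Fin 3) →ₗ[ℝ] EuclideanSpace ℝ (Fin 3))
          + b • B + c • C = 0 → a = 0 ∧ b = 0 ∧ c = 0) ∧
      (∀ x y z w : EuclideanSpace ℝ (Fin 3),
        RS3 (LinearMap.id) x y z w + RS3 B x y z w - RL3 C x y z w = 0) := by
  have hs : Real.sqrt 2 * Real.sqrt 2 = 2 := Real.mul_self_sqrt (by norm_num)
  have hspos : (0:ℝ) < Real.sqrt 2 := Real.sqrt_pos.mpr (by norm_num)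
  refine ⟨Bmap, Cmap, ?_, ?_, ?_, ?_⟩
  · symm
    rw [LinearMap.eq_adjoint_iff]
    intro x y
    simp [Bmap, PiLp.inner_apply, Fin.sum_univ_three]
    ring
  · symm
    rw [LinearMap.eq_adjoint_iff]
    intro x y
    simp [Cmap, PiLp.inner_apply, Fin.sum_univ_three]
  · intro a b c h
    have h1 := congrArg (fun v => v 0) (LinearMap.congr_fun h (EuclideanSpace.single 0 1))
    have h2 := congrArg (fun v => v 1) (LinearMap.congr_fun h (EuclideanSpace.single 0 1))
    have h3 := congrArg (fun v => v 2) (LinearMap.congr_fun h (EuclideanSpace.single 2 1))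
    simp [Bmap, Cmap, EuclideanSpace.single_apply] at h1 h2 h3
    have hb : b = 0 := by nlinarith
    have ha : a = 0 := by nlinarith
    exact ⟨ha, hb, by linarith⟩
  · intro x y z w
    simp only [RS3, RL3, Bmap, Cmap, LinearMap.id_apply, LinearMap.coe_mk, AddHom.coe_mk,
      PiLp.inner_apply, RCLike.inner_apply, conj_trivial, Fin.sum_univ_three,
      Matrix.cons_val_zero, Matrix.cons_val_one, Matrix.head_cons, Matrix.cons_val_two,
      Matrix.tail_cons, PiLp.toLp_apply]
    linear_combination ((x 0*w 0*y 1*z 1 - x 0*z 0*y 1*w 1)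
      + (x 1*w 1*y 0*z 0 - x 1*z 1*y 0*w 0)
      - (1/2)*((x 0*w 0*y 2*z 2 - x 0*z 0*y 2*w 2)
        + (x 2*w 2*y 0*z 0 - x 2*z 2*y 0*w 0)
        + (x 1*w 1*y 2*z 2 - x 1*z 1*y 2*w 2)
        + (x 2*w 2*y 1*z 1 - x 2*z 2*y 1*w 1))) * hs
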